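/- arXiv:1709.08582 — 2 statements merged into one kernel-verified Lean document; each statement's English description precedes it below -/
import Mathlib

section
/- For the quadratic Lie superalgebra g₄,₂ = ℂX₀ ⊕ ℂY₀ ⊕ ℂX₁ ⊕ ℂY₁ with nonzero brackets [X₁,Y₁] = X₀, [Y₀,X₁] = X₁, [Y₀,Y₁] = -Y₁, the second Lie superalgebra cohomology group with trivial coefficients vanishes: H²(g₄,₂, ℂ) = 0. -/
/-- A bilinear scalar-valued map, given as a bare function. -/
def IsBilinC {M N : Type*} [AddCommGroup M] [Module ℂ M] [AddCommGroup N] [Module ℂ N]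
    (f : M → N → ℂ) : Prop :=
  (∀ (c : ℂ) (x y : M) (z : N), f (c • x + y) z = c * f x z + f y z) ∧
  (∀ (c : ℂ) (x : M) (y z : N), f x (c • y + z) = c * f x y + f x z)

/-- A linear scalar-valued map, given as a bare function. -/
def IsLinC {M : Type*} [AddCommGroup M] [Module ℂ M] (f : M → ℂ) : Prop :=
  ∀ (c : ℂ) (x y : M), f (c • x + y) = c * f x + f y

/- The elementary quadratic Lie superalgebra `g₄,₂ˢ`: even part `ℂX₀ ⊕ ℂY₀`,
odd part `ℂX₁ ⊕ ℂY₁`, nonzero brackets `[X₁,Y₁] = X₀`, `[Y₀,X₁] = X₁`,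
`[Y₀,Y₁] = -Y₁`.  Bracket components: -/

/-- even-even bracket of `g₄,₂` (zero). -/
def br00 : ℂ × ℂ → ℂ × ℂ → ℂ × ℂ := fun _ _ => (0, 0)

/-- even-odd bracket of `g₄,₂`: `[Y₀,X₁] = X₁`, `[Y₀,Y₁] = -Y₁`. -/
def br01 : ℂ × ℂ → ℂ × ℂ → ℂ × ℂ := fun A U => (A.2 * U.1, -(A.2 * U.2))

/-- odd-odd bracket of `g₄,₂`: `[X₁,Y₁] = X₀` (symmetric). -/
def br11 : ℂ × ℂ → ℂ × ℂ → ℂ × ℂ := fun U V => (U.1 * V.2 + U.2 * V.1, 0)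

/-- A 2-cocycle of `g₄,₂` with trivial coefficients: a 2-cochain
`(w0, wm, w1) ∈ Λ²g₀* ⊕ (g₀* ⊗ g₁*) ⊕ Sym²g₁*` killed by the Chevalley–Eilenberg
differential `δ₂` (written out on homogeneous triples of each degree type). -/
def IsCocycle2 (w0 : ℂ × ℂ → ℂ × ℂ → ℂ) (wm : ℂ × ℂ → ℂ × ℂ → ℂ)
    (w1 : ℂ × ℂ → ℂ × ℂ → ℂ) : Prop :=
  IsBilinC w0 ∧ IsBilinC wm ∧ IsBilinC w1 ∧
  (∀ A B, w0 A B = - w0 B A) ∧ (∀ U V, w1 U V = w1 V U) ∧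
  (∀ A B C, - w0 (br00 A B) C + w0 (br00 A C) B + w0 A (br00 B C) = 0) ∧
  (∀ A B U, - wm (br00 A B) U - wm B (br01 A U) + wm A (br01 B U) = 0) ∧
  (∀ A U V, - w1 (br01 A U) V - w1 (br01 A V) U + w0 A (br11 U V) = 0) ∧
  (∀ U V W, wm (br11 U V) W + wm (br11 U W) V + wm (br11 V W) U = 0)

/-- A 2-coboundary of `g₄,₂`: `δ₁` of a 1-cochain `φ = (f0, f1) ∈ g₀* ⊕ g₁*`,
`(δφ)(X,Y) = -φ([X,Y])`. -/
def IsCoboundary2 (w0 : ℂ × ℂ → ℂ × ℂ → ℂ) (wm : ℂ × ℂ → ℂ × ℂ → ℂ)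
    (w1 : ℂ × ℂ → ℂ × ℂ → ℂ) : Prop :=
  ∃ (f0 : ℂ × ℂ → ℂ) (f1 : ℂ × ℂ → ℂ), IsLinC f0 ∧ IsLinC f1 ∧
    (∀ A B, w0 A B = - f0 (br00 A B)) ∧
    (∀ A U, wm A U = - f1 (br01 A U)) ∧
    (∀ U V, w1 U V = - f0 (br11 U V))


private lemma g42_lin_expand (f : ℂ × ℂ → ℂ)
    (hf : ∀ (c : ℂ) (x y : ℂ × ℂ), f (c • x + y) = c * f x + f y)
    (a b : ℂ) : f (a, b) = a * f (1, 0) + b * f (0, 1) := by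
  have h0 : f 0 = 0 := by simpa using hf 1 0 0
  have h1 := hf a (1,0) (b • ((0,1) : ℂ × ℂ))
  have h2 := hf b (0,1) ((0,0) : ℂ × ℂ)
  simp [Prod.smul_mk, Prod.mk_add_mk] at h1 h2
  rw [h1, h2, show ((0:ℂ), (0:ℂ)) = (0 : ℂ × ℂ) from rfl, h0]; ring

private lemma g42_bilin_expand (f : ℂ × ℂ → ℂ × ℂ → ℂ) (hf : IsBilinC f) (a b c d : ℂ) :
    f (a, b) (c, d) = a * c * f (1,0) (1,0) + a * d * f (1,0) (0,1)
      + b * c * f (0,1) (1,0) + b * d * f (0,1) (0,1) := by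
  obtain ⟨hl, hr⟩ := hf
  have el : ∀ z : ℂ × ℂ, f (a, b) z = a * f (1,0) z + b * f (0,1) z := fun z =>
    g42_lin_expand (fun x => f x z) (fun c x y => hl c x y z) a b
  have er : ∀ x : ℂ × ℂ, f x (c, d) = c * f x (1,0) + d * f x (0,1) := fun x =>
    g42_lin_expand (f x) (fun c y z => hr c x y z) c d
  rw [el, er, er]; ring

private lemma g42_bilin_zero_left (f : ℂ × ℂ → ℂ × ℂ → ℂ) (hf : IsBilinC f) (z : ℂ × ℂ) :
    f 0 z = 0 := by simpa using hf.1 1 0 0 z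

private lemma g42_bilin_zero_right (f : ℂ × ℂ → ℂ × ℂ → ℂ) (hf : IsBilinC f) (x : ℂ × ℂ) :
    f x 0 = 0 := by simpa using hf.2 1 x 0 0

/-- The second cohomology group with trivial coefficients of the elementary quadratic
Lie superalgebra `g₄,₂ˢ` vanishes: every 2-cocycle is a 2-coboundary. -/
theorem second_cohomology_g42_trivial
    (w0 wm w1 : ℂ × ℂ → ℂ × ℂ → ℂ) (h : IsCocycle2 w0 wm w1) :
    IsCoboundary2 w0 wm w1 := by
  obtain ⟨hb0, hbm, hb1, hanti, hsym, _h6, h7, h8, _h9⟩ := h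
  have H0 := g42_bilin_expand w0 hb0
  have Hm := g42_bilin_expand wm hbm
  have H1 := g42_bilin_expand w1 hb1
  have e1 := h8 (0,1) (1,0) (1,0)
  have e2 := h8 (0,1) (0,1) (0,1)
  have e3 := h8 (0,1) (1,0) (0,1)
  have e4 := h7 (1,0) (0,1) (1,0)
  have e5 := h7 (1,0) (0,1) (0,1)
  norm_num [br00, br01, br11] at e1 e2 e3 e4 e5
  -- basis values forced to vanish
  have z1 : w1 (1,0) (1,0) = 0 := by
    linear_combination (-e1)/2 + (g42_bilin_zero_right w0 hb0 (0,1))/2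
  have z2 : w1 (0,1) (0,1) = 0 := by
    linear_combination e2/2 - (g42_bilin_zero_right w0 hb0 (0,1))/2
      + (H1 0 (-1) 0 1)
  have z3 : w0 (1,0) (0,1) = 0 := by
    linear_combination hanti (1,0) (0,1) - e3 - (H1 0 (-1) 1 0) + hsym (0,1) (1,0)
  have z4 : wm (1,0) (1,0) = 0 := by
    linear_combination e4 + g42_bilin_zero_left wm hbm (1,0)
      + g42_bilin_zero_right wm hbm (0,1)
  have z5 : wm (1,0) (0,1) = 0 := by
    linear_combination -e5 + (Hm 1 0 0 (-1)) - g42_bilin_zero_left wm hbm (0,1)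
      - g42_bilin_zero_right wm hbm (0,1)
  have z6 : w0 (1,0) (1,0) = 0 := by linear_combination (hanti (1,0) (1,0))/2
  have z7 : w0 (0,1) (0,1) = 0 := by linear_combination (hanti (0,1) (0,1))/2
  have z8 : w0 (0,1) (1,0) = 0 := by linear_combination hanti (0,1) (1,0) - z3
  refine ⟨fun A => -(w1 (1,0) (0,1)) * A.1,
          fun U => -(wm (0,1) (1,0)) * U.1 + wm (0,1) (0,1) * U.2, ?_, ?_, ?_, ?_, ?_⟩
  · intro c x y
    simp only [Prod.fst_add, Prod.smul_fst, smul_eq_mul]; ring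
  · intro c x y
    simp only [Prod.fst_add, Prod.snd_add, Prod.smul_fst, Prod.smul_snd, smul_eq_mul]; ring
  · rintro ⟨a, b⟩ ⟨c, d⟩
    simp only [br00]
    linear_combination H0 a b c d + a*c*z6 + a*d*z3 + b*c*z8 + b*d*z7
  · rintro ⟨a, b⟩ ⟨c, d⟩
    simp only [br01]
    linear_combination Hm a b c d + a*c*z4 + a*d*z5
  · rintro ⟨a, b⟩ ⟨c, d⟩
    simp only [br11]
    linear_combination H1 a b c d + a*c*z1 + b*d*z2 + b*c*(hsym (0,1) (1,0))
end

section
/- Let (g,B) be a quadratic Lie superalgebra and D an even skew-supersymmetric superderivation of g. Define g̅ = ℂe ⊕ g ⊕ ℂf with bracket [X,Y]_{g̅} = [X,Y]_g + B(D(X),Y)·f, [e,X] = D(X), [f, g̅] = 0 for X,Y ∈ g, and bilinear form B̅ extending B with B̅(e,f) = 1, B̅(e,g) = B̅(f,g) = 0, B̅(e,e) = B̅(f,f) = 0. Then (g̅, B̅) is a quadratic Lie superalgebra. -/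
/-- A bilinear map between complex modules, given as a bare function. -/
def IsBilinMap {M N P : Type*} [AddCommGroup M] [Module ℂ M] [AddCommGroup N] [Module ℂ N]
    [AddCommGroup P] [Module ℂ P] (f : M → N → P) : Prop :=
  (∀ (a : ℂ) (x y : M) (z : N), f (a • x + y) z = a • f x z + f y z) ∧
  (∀ (a : ℂ) (x : M) (y z : N), f x (a • y + z) = a • f x y + f x z)


section BilinHelpers
variable {M N P : Type*} [AddCommGroup M] [Module ℂ M] [AddCommGroup N] [Module ℂ N]
    [AddCommGroup P] [Module ℂ P] {f : M → N → P}

lemma bl_zl (h : IsBilinMap f) (z : N) : f 0 z = 0 := by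
  have := h.1 1 0 0 z; simpa using this

lemma bl_al (h : IsBilinMap f) (x y : M) (z : N) : f (x + y) z = f x z + f y z := by
  simpa using h.1 1 x y z

lemma bl_sl (h : IsBilinMap f) (a : ℂ) (x : M) (z : N) : f (a • x) z = a • f x z := by
  have := h.1 a x 0 z; simpa [bl_zl h] using this

lemma bl_nl (h : IsBilinMap f) (x : M) (z : N) : f (-x) z = - f x z := by
  rw [← neg_one_smul ℂ x, bl_sl h, neg_one_smul]

lemma bl_subl (h : IsBilinMap f) (x y : M) (z : N) : f (x - y) z = f x z - f y z := by
  rw [sub_eq_add_neg, bl_al h, bl_nl h, sub_eq_add_neg]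

lemma bl_zr (h : IsBilinMap f) (x : M) : f x 0 = 0 := by
  have := h.2 1 x 0 0; simpa using this

lemma bl_ar (h : IsBilinMap f) (x : M) (y z : N) : f x (y + z) = f x y + f x z := by
  simpa using h.2 1 x y z

lemma bl_sr (h : IsBilinMap f) (a : ℂ) (x : M) (y : N) : f x (a • y) = a • f x y := by
  have := h.2 a x y 0; simpa [bl_zr h] using this

lemma bl_nr (h : IsBilinMap f) (x : M) (y : N) : f x (-y) = - f x y := by
  rw [← neg_one_smul ℂ y, bl_sr h, neg_one_smul]

lemma bl_subr (h : IsBilinMap f) (x : M) (y z : N) : f x (y - z) = f x y - f x z := by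
  rw [sub_eq_add_neg, bl_ar h, bl_nr h, sub_eq_add_neg]

end BilinHelpers

/-- A quadratic Lie superalgebra `g = g0 ⊕ g1`, described by the components of its
super bracket (`b00 : g0 × g0 → g0`, `b01 : g0 × g1 → g1`, `b11 : g1 × g1 → g0`)
and of its even supersymmetric invariant non-degenerate bilinear form
(`B0` on the even part, `B1` on the odd part; evenness means that mixed pairings
vanish, which is built into this description). -/
structure QuadLieSuperalgebra (g0 g1 : Type*) [AddCommGroup g0] [Module ℂ g0]
    [AddCommGroup g1] [Module ℂ g1] where
  b00 : g0 → g0 → g0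
  b01 : g0 → g1 → g1
  b11 : g1 → g1 → g0
  B0 : g0 → g0 → ℂ
  B1 : g1 → g1 → ℂ
  hb00 : IsBilinMap b00
  hb01 : IsBilinMap b01
  hb11 : IsBilinMap b11
  hB0 : IsBilinMap B0
  hB1 : IsBilinMap B1
  /-- skew-supersymmetry on the even part -/
  b00_skew : ∀ X Y, b00 X Y = - b00 Y X
  /-- skew-supersymmetry on the odd part: `[U,V] = [V,U]` for odd `U, V` -/
  b11_symm : ∀ U V, b11 U V = b11 V U
  /-- super Jacobi identity, (even, even, even) component -/
  jacobi000 : ∀ X Y Z, b00 (b00 X Y) Z + b00 (b00 Y Z) X + b00 (b00 Z X) Y = 0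
  /-- super Jacobi identity, (even, even, odd) component -/
  jacobi001 : ∀ X Y U, b01 (b00 X Y) U = b01 X (b01 Y U) - b01 Y (b01 X U)
  /-- super Jacobi identity, (even, odd, odd) component -/
  jacobi011 : ∀ X U V, b00 X (b11 U V) = b11 (b01 X U) V + b11 U (b01 X V)
  /-- super Jacobi identity, (odd, odd, odd) component -/
  jacobi111 : ∀ U V W, b01 (b11 U V) W + b01 (b11 V W) U + b01 (b11 W U) V = 0
  /-- supersymmetry of `B` on the even part -/
  B0_symm : ∀ X Y, B0 X Y = B0 Y X
  /-- supersymmetry of `B` on the odd part -/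
  B1_skew : ∀ U V, B1 U V = - B1 V U
  /-- invariance, (even, even, even) component -/
  inv000 : ∀ X Y Z, B0 (b00 X Y) Z = B0 X (b00 Y Z)
  /-- invariance, (even, odd, odd) component -/
  inv011 : ∀ X U V, B1 (b01 X U) V = B0 X (b11 U V)
  /-- non-degeneracy on the even part -/
  B0_nondeg : ∀ X, (∀ Y, B0 X Y = 0) → X = 0
  /-- non-degeneracy on the odd part -/
  B1_nondeg : ∀ U, (∀ V, B1 U V = 0) → U = 0

variable {g0 g1 : Type*} [AddCommGroup g0] [Module ℂ g0] [AddCommGroup g1] [Module ℂ g1]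

/-- One-dimensional double extension: given a quadratic Lie superalgebra `(g,B)` and an
even skew-supersymmetric superderivation `D` (with components `D0`, `D1`), the space
`g̅ = ℂe ⊕ g ⊕ ℂf` (an element of `ℂ × g0 × ℂ` is `a•e + X + c•f`) with bracket
`[X,Y]_g̅ = [X,Y]_g + B(D X, Y)·f`, `[e,X] = D X`, `[f,g̅] = 0` and form `B̅` extending `B`
with `B̅(e,f) = 1`, `B̅(e,e) = B̅(f,f) = 0`, `B̅(e,g) = B̅(f,g) = 0`
is again a quadratic Lie superalgebra. -/
theorem double_extension_is_quadratic_lie_superalgebra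
    (Q : QuadLieSuperalgebra g0 g1) (D0 : g0 → g0) (D1 : g1 → g1)
    (hD0lin : ∀ (a : ℂ) (X Y : g0), D0 (a • X + Y) = a • D0 X + D0 Y)
    (hD1lin : ∀ (a : ℂ) (U V : g1), D1 (a • U + V) = a • D1 U + D1 V)
    (hder00 : ∀ X Y, D0 (Q.b00 X Y) = Q.b00 (D0 X) Y + Q.b00 X (D0 Y))
    (hder01 : ∀ X U, D1 (Q.b01 X U) = Q.b01 (D0 X) U + Q.b01 X (D1 U))
    (hder11 : ∀ U V, D0 (Q.b11 U V) = Q.b11 (D1 U) V + Q.b11 U (D1 V))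
    (hskew0 : ∀ X Y, Q.B0 (D0 X) Y = - Q.B0 X (D0 Y))
    (hskew1 : ∀ U V, Q.B1 (D1 U) V = - Q.B1 U (D1 V)) :
    ∃ Qbar : QuadLieSuperalgebra (ℂ × g0 × ℂ) g1,
      Qbar.b00 = (fun A B =>
        ((0 : ℂ), Q.b00 A.2.1 B.2.1 + A.1 • D0 B.2.1 - B.1 • D0 A.2.1,
          Q.B0 (D0 A.2.1) B.2.1)) ∧
      Qbar.b01 = (fun A U => Q.b01 A.2.1 U + A.1 • D1 U) ∧
      Qbar.b11 = (fun U V => ((0 : ℂ), Q.b11 U V, Q.B1 (D1 U) V)) ∧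
      Qbar.B0 = (fun A B => Q.B0 A.2.1 B.2.1 + A.1 * B.2.2 + B.1 * A.2.2) ∧
      Qbar.B1 = Q.B1 := by
  have d0zero : D0 0 = 0 := by have := hD0lin 1 0 0; simpa using this
  have d0add : ∀ X Y, D0 (X + Y) = D0 X + D0 Y := fun X Y => by simpa using hD0lin 1 X Y
  have d0smul : ∀ (a : ℂ) X, D0 (a • X) = a • D0 X := fun a X => by
    have := hD0lin a X 0; simpa [d0zero] using this
  have d0neg : ∀ X, D0 (-X) = - D0 X := fun X => by
    rw [← neg_one_smul ℂ X, d0smul, neg_one_smul]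
  have d0sub : ∀ X Y, D0 (X - Y) = D0 X - D0 Y := fun X Y => by
    rw [sub_eq_add_neg, d0add, d0neg, sub_eq_add_neg]
  have d1zero : D1 0 = 0 := by have := hD1lin 1 0 0; simpa using this
  have d1add : ∀ U V, D1 (U + V) = D1 U + D1 V := fun U V => by simpa using hD1lin 1 U V
  have d1smul : ∀ (a : ℂ) U, D1 (a • U) = a • D1 U := fun a U => by
    have := hD1lin a U 0; simpa [d1zero] using this
  have d1neg : ∀ U, D1 (-U) = - D1 U := fun U => by
    rw [← neg_one_smul ℂ U, d1smul, neg_one_smul]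
  have d1sub : ∀ U V, D1 (U - V) = D1 U - D1 V := fun U V => by
    rw [sub_eq_add_neg, d1add, d1neg, sub_eq_add_neg]
  -- cyclic-rotation identity for B0/b00
  have pair : ∀ X W Z : g0, Q.B0 (Q.b00 X W) Z = Q.B0 (Q.b00 W Z) X := by
    intro X W Z; rw [Q.inv000, Q.B0_symm]
  have sum3 : ∀ X Y Z : g0, Q.B0 (Q.b00 (D0 X) Y) Z + Q.B0 (Q.b00 (D0 Y) Z) X +
      Q.B0 (Q.b00 (D0 Z) X) Y = 0 := by
    intro X Y Z
    have h1 : Q.B0 (Q.b00 (D0 X) Y) Z = Q.B0 (D0 X) (Q.b00 Y Z) := Q.inv000 _ _ _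
    have h2 : Q.B0 (D0 X) (Q.b00 Y Z) = - Q.B0 X (D0 (Q.b00 Y Z)) := hskew0 _ _
    have h3 : D0 (Q.b00 Y Z) = Q.b00 (D0 Y) Z + Q.b00 Y (D0 Z) := hder00 Y Z
    have h4 : Q.B0 X (Q.b00 (D0 Y) Z + Q.b00 Y (D0 Z)) =
        Q.B0 X (Q.b00 (D0 Y) Z) + Q.B0 X (Q.b00 Y (D0 Z)) := bl_ar Q.hB0 _ _ _
    have h5 : Q.B0 X (Q.b00 (D0 Y) Z) = Q.B0 (Q.b00 (D0 Y) Z) X := Q.B0_symm _ _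
    have h6 : Q.B0 X (Q.b00 Y (D0 Z)) = Q.B0 (Q.b00 (D0 Z) X) Y := by
      rw [Q.B0_symm, pair]
    rw [h1, h2, h3, h4, h5, h6]; ring
  have dd : ∀ X Y : g0, Q.B0 (D0 (D0 X)) Y = Q.B0 (D0 (D0 Y)) X := by
    intro X Y
    have h1 := hskew0 (D0 X) Y
    have h2 := hskew0 X (D0 Y)
    have h3 := Q.B0_symm X (D0 (D0 Y))
    linear_combination h1 - h2 + h3
  have h3' : ∀ (X : g0) (U V : g1),
      Q.B1 (D1 U) (Q.b01 X V) = - Q.B0 X (Q.b11 (D1 U) V) := by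
    intro X U V
    rw [Q.B1_skew, Q.inv011, Q.b11_symm]
  refine ⟨{
      b00 := fun A B =>
        ((0 : ℂ), Q.b00 A.2.1 B.2.1 + A.1 • D0 B.2.1 - B.1 • D0 A.2.1,
          Q.B0 (D0 A.2.1) B.2.1)
      b01 := fun A U => Q.b01 A.2.1 U + A.1 • D1 U
      b11 := fun U V => ((0 : ℂ), Q.b11 U V, Q.B1 (D1 U) V)
      B0 := fun A B => Q.B0 A.2.1 B.2.1 + A.1 * B.2.2 + B.1 * A.2.2
      B1 := Q.B1
      hb00 := ?_
      hb01 := ?_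
      hb11 := ?_
      hB0 := ?_
      hB1 := Q.hB1
      b00_skew := ?_
      b11_symm := ?_
      jacobi000 := ?_
      jacobi001 := ?_
      jacobi011 := ?_
      jacobi111 := ?_
      B0_symm := ?_
      B1_skew := Q.B1_skew
      inv000 := ?_
      inv011 := ?_
      B0_nondeg := ?_
      B1_nondeg := Q.B1_nondeg }, rfl, rfl, rfl, rfl, rfl⟩
  · constructor
    · rintro r ⟨a, X, c⟩ ⟨b, Y, d⟩ ⟨e, Z, f⟩
      simp only [Prod.smul_mk, Prod.mk_add_mk, Prod.mk.injEq, smul_eq_mul, bl_al Q.hb00, bl_sl Q.hb00, bl_nl Q.hb00, bl_subl Q.hb00, bl_ar Q.hb00, bl_sr Q.hb00, bl_nr Q.hb00, bl_subr Q.hb00, bl_zl Q.hb00, bl_zr Q.hb00, bl_al Q.hb01, bl_sl Q.hb01, bl_nl Q.hb01, bl_subl Q.hb01, bl_ar Q.hb01, bl_sr Q.hb01, bl_nr Q.hb01, bl_subr Q.hb01, bl_zl Q.hb01, bl_zr Q.hb01, bl_al Q.hb11, bl_sl Q.hb11, bl_nl Q.hb11, bl_subl Q.hb11, bl_ar Q.hb11,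 bl_sr Q.hb11, bl_nr Q.hb11, bl_subr Q.hb11, bl_zl Q.hb11, bl_zr Q.hb11, bl_al Q.hB0, bl_sl Q.hB0, bl_nl Q.hB0, bl_subl Q.hB0, bl_ar Q.hB0, bl_sr Q.hB0, bl_nr Q.hB0, bl_subr Q.hB0, bl_zl Q.hB0, bl_zr Q.hB0, bl_al Q.hB1, bl_sl Q.hB1, bl_nl Q.hB1, bl_subl Q.hB1, bl_ar Q.hB1, bl_sr Q.hB1, bl_nr Q.hB1, bl_subr Q.hB1, bl_zl Q.hB1, bl_zr Q.hB1, d0add, d0smul, d0neg, d0sub, d0zero, d1add, d1smul, d1neg, d1sub, d1zero, hder00, hder01, hder11, smul_add, smul_sub, smul_neg, smul_smul, zero_smul, smul_zero, mul_zero, zero_mul, one_mul, mul_one, add_zero, zero_add, neg_zero, sub_zero, zero_sub]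
      refine ⟨trivial, by module, trivial⟩
    · rintro r ⟨a, X, c⟩ ⟨b, Y, d⟩ ⟨e, Z, f⟩
      simp only [Prod.smul_mk, Prod.mk_add_mk, Prod.mk.injEq, smul_eq_mul, bl_al Q.hb00, bl_sl Q.hb00, bl_nl Q.hb00, bl_subl Q.hb00, bl_ar Q.hb00, bl_sr Q.hb00, bl_nr Q.hb00, bl_subr Q.hb00, bl_zl Q.hb00, bl_zr Q.hb00, bl_al Q.hb01, bl_sl Q.hb01, bl_nl Q.hb01, bl_subl Q.hb01, bl_ar Q.hb01, bl_sr Q.hb01, bl_nr Q.hb01, bl_subr Q.hb01, bl_zl Q.hb01, bl_zr Q.hb01, bl_al Q.hb11, bl_sl Q.hb11, bl_nl Q.hb11, bl_subl Q.hb11, bl_ar Q.hb11, bl_sr Q.hb11, bl_nr Q.hb11, bl_subr Q.hb11, bl_zl Q.hb11, bl_zr Q.hb11, bl_al Q.hB0, bl_sl Q.hB0, bl_nl Q.hB0, bl_subl Q.hB0, bl_ar Q.hB0, bl_sr Q.hB0, bl_nr Q.hB0, bl_subr Q.hB0, bl_zl Q.hB0, bl_zr Q.hB0, bl_al Q.hB1,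 bl_sl Q.hB1, bl_nl Q.hB1, bl_subl Q.hB1, bl_ar Q.hB1, bl_sr Q.hB1, bl_nr Q.hB1, bl_subr Q.hB1, bl_zl Q.hB1, bl_zr Q.hB1, d0add, d0smul, d0neg, d0sub, d0zero, d1add, d1smul, d1neg, d1sub, d1zero, hder00, hder01, hder11, smul_add, smul_sub, smul_neg, smul_smul, zero_smul, smul_zero, mul_zero, zero_mul, one_mul, mul_one, add_zero, zero_add, neg_zero, sub_zero, zero_sub]
      refine ⟨trivial, by module, trivial⟩
  · constructor
    · rintro r ⟨a, X, c⟩ ⟨b, Y, d⟩ U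
      simp only [Prod.smul_mk, Prod.mk_add_mk, Prod.mk.injEq, smul_eq_mul, bl_al Q.hb00, bl_sl Q.hb00, bl_nl Q.hb00, bl_subl Q.hb00, bl_ar Q.hb00, bl_sr Q.hb00, bl_nr Q.hb00, bl_subr Q.hb00, bl_zl Q.hb00, bl_zr Q.hb00, bl_al Q.hb01, bl_sl Q.hb01, bl_nl Q.hb01, bl_subl Q.hb01, bl_ar Q.hb01, bl_sr Q.hb01, bl_nr Q.hb01, bl_subr Q.hb01, bl_zl Q.hb01, bl_zr Q.hb01, bl_al Q.hb11, bl_sl Q.hb11, bl_nl Q.hb11, bl_subl Q.hb11, bl_ar Q.hb11, bl_sr Q.hb11, bl_nr Q.hb11, bl_subr Q.hb11, bl_zl Q.hb11, bl_zr Q.hb11, bl_al Q.hB0, bl_sl Q.hB0, bl_nl Q.hB0, bl_subl Q.hB0, bl_ar Q.hB0, bl_sr Q.hB0, bl_nr Q.hB0, bl_subr Q.hB0, bl_zl Q.hB0, bl_zr Q.hB0, bl_al Q.hB1, bl_sl Q.hB1, bl_nl Q.hB1, bl_subl Q.hB1, bl_ar Q.hB1, bl_sr Q.hB1, bl_nr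 Q.hB1, bl_subr Q.hB1, bl_zl Q.hB1, bl_zr Q.hB1, d0add, d0smul, d0neg, d0sub, d0zero, d1add, d1smul, d1neg, d1sub, d1zero, hder00, hder01, hder11, smul_add, smul_sub, smul_neg, smul_smul, zero_smul, smul_zero, mul_zero, zero_mul, one_mul, mul_one, add_zero, zero_add, neg_zero, sub_zero, zero_sub]
      module
    · rintro r ⟨a, X, c⟩ U V
      simp only [Prod.smul_mk, Prod.mk_add_mk, Prod.mk.injEq, smul_eq_mul, bl_al Q.hb00, bl_sl Q.hb00, bl_nl Q.hb00, bl_subl Q.hb00, bl_ar Q.hb00, bl_sr Q.hb00, bl_nr Q.hb00, bl_subr Q.hb00, bl_zl Q.hb00, bl_zr Q.hb00, bl_al Q.hb01, bl_sl Q.hb01, bl_nl Q.hb01, bl_subl Q.hb01, bl_ar Q.hb01, bl_sr Q.hb01, bl_nr Q.hb01, bl_subr Q.hb01, bl_zl Q.hb01, bl_zr Q.hb01, bl_al Q.hb11, bl_sl Q.hb11, bl_nl Q.hb11, bl_subl Q.hb11, bl_ar Q.hb11, bl_sr Q.hb11, bl_nr Q.hb11, bl_subr Q.hb11, bl_zl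 Q.hb11, bl_zr Q.hb11, bl_al Q.hB0, bl_sl Q.hB0, bl_nl Q.hB0, bl_subl Q.hB0, bl_ar Q.hB0, bl_sr Q.hB0, bl_nr Q.hB0, bl_subr Q.hB0, bl_zl Q.hB0, bl_zr Q.hB0, bl_al Q.hB1, bl_sl Q.hB1, bl_nl Q.hB1, bl_subl Q.hB1, bl_ar Q.hB1, bl_sr Q.hB1, bl_nr Q.hB1, bl_subr Q.hB1, bl_zl Q.hB1, bl_zr Q.hB1, d0add, d0smul, d0neg, d0sub, d0zero, d1add, d1smul, d1neg, d1sub, d1zero, hder00, hder01, hder11, smul_add, smul_sub, smul_neg, smul_smul, zero_smul, smul_zero, mul_zero, zero_mul, one_mul, mul_one, add_zero, zero_add, neg_zero, sub_zero, zero_sub]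
      module
  · constructor
    · rintro r U V W
      simp only [Prod.smul_mk, Prod.mk_add_mk, Prod.mk.injEq, smul_eq_mul, bl_al Q.hb00, bl_sl Q.hb00, bl_nl Q.hb00, bl_subl Q.hb00, bl_ar Q.hb00, bl_sr Q.hb00, bl_nr Q.hb00, bl_subr Q.hb00, bl_zl Q.hb00, bl_zr Q.hb00, bl_al Q.hb01, bl_sl Q.hb01, bl_nl Q.hb01, bl_subl Q.hb01, bl_ar Q.hb01, bl_sr Q.hb01, bl_nr Q.hb01, bl_subr Q.hb01, bl_zl Q.hb01, bl_zr Q.hb01, bl_al Q.hb11, bl_sl Q.hb11, bl_nl Q.hb11, bl_subl Q.hb11, bl_ar Q.hb11, bl_sr Q.hb11, bl_nr Q.hb11, bl_subr Q.hb11, bl_zl Q.hb11, bl_zr Q.hb11, bl_al Q.hB0, bl_sl Q.hB0, bl_nl Q.hB0, bl_subl Q.hB0, bl_ar Q.hB0, bl_sr Q.hB0, bl_nr Q.hB0, bl_subr Q.hB0, bl_zl Q.hB0, bl_zr Q.hB0, bl_al Q.hB1, bl_sl Q.hB1, bl_nl Q.hB1, bl_subl Q.hB1, bl_ar Q.hB1,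 bl_sr Q.hB1, bl_nr Q.hB1, bl_subr Q.hB1, bl_zl Q.hB1, bl_zr Q.hB1, d0add, d0smul, d0neg, d0sub, d0zero, d1add, d1smul, d1neg, d1sub, d1zero, hder00, hder01, hder11, smul_add, smul_sub, smul_neg, smul_smul, zero_smul, smul_zero, mul_zero, zero_mul, one_mul, mul_one, add_zero, zero_add, neg_zero, sub_zero, zero_sub]
    · rintro r U V W
      simp only [Prod.smul_mk, Prod.mk_add_mk, Prod.mk.injEq, smul_eq_mul, bl_al Q.hb00, bl_sl Q.hb00, bl_nl Q.hb00, bl_subl Q.hb00, bl_ar Q.hb00, bl_sr Q.hb00, bl_nr Q.hb00, bl_subr Q.hb00, bl_zl Q.hb00, bl_zr Q.hb00, bl_al Q.hb01, bl_sl Q.hb01, bl_nl Q.hb01, bl_subl Q.hb01, bl_ar Q.hb01, bl_sr Q.hb01, bl_nr Q.hb01, bl_subr Q.hb01, bl_zl Q.hb01, bl_zr Q.hb01, bl_al Q.hb11, bl_sl Q.hb11, bl_nl Q.hb11, bl_subl Q.hb11, bl_ar Q.hb11, bl_sr Q.hb11, bl_nr Q.hb11, bl_subr Q.hb11, bl_zl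 Q.hb11, bl_zr Q.hb11, bl_al Q.hB0, bl_sl Q.hB0, bl_nl Q.hB0, bl_subl Q.hB0, bl_ar Q.hB0, bl_sr Q.hB0, bl_nr Q.hB0, bl_subr Q.hB0, bl_zl Q.hB0, bl_zr Q.hB0, bl_al Q.hB1, bl_sl Q.hB1, bl_nl Q.hB1, bl_subl Q.hB1, bl_ar Q.hB1, bl_sr Q.hB1, bl_nr Q.hB1, bl_subr Q.hB1, bl_zl Q.hB1, bl_zr Q.hB1, d0add, d0smul, d0neg, d0sub, d0zero, d1add, d1smul, d1neg, d1sub, d1zero, hder00, hder01, hder11, smul_add, smul_sub, smul_neg, smul_smul, zero_smul, smul_zero, mul_zero, zero_mul, one_mul, mul_one, add_zero, zero_add, neg_zero, sub_zero, zero_sub]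
  · constructor
    · rintro r ⟨a, X, c⟩ ⟨b, Y, d⟩ ⟨e, Z, f⟩
      simp only [Prod.smul_mk, Prod.mk_add_mk, Prod.mk.injEq, smul_eq_mul, bl_al Q.hb00, bl_sl Q.hb00, bl_nl Q.hb00, bl_subl Q.hb00, bl_ar Q.hb00, bl_sr Q.hb00, bl_nr Q.hb00, bl_subr Q.hb00, bl_zl Q.hb00, bl_zr Q.hb00, bl_al Q.hb01, bl_sl Q.hb01, bl_nl Q.hb01, bl_subl Q.hb01, bl_ar Q.hb01, bl_sr Q.hb01, bl_nr Q.hb01, bl_subr Q.hb01, bl_zl Q.hb01, bl_zr Q.hb01, bl_al Q.hb11, bl_sl Q.hb11, bl_nl Q.hb11, bl_subl Q.hb11, bl_ar Q.hb11, bl_sr Q.hb11, bl_nr Q.hb11, bl_subr Q.hb11, bl_zl Q.hb11, bl_zr Q.hb11, bl_al Q.hB0, bl_sl Q.hB0, bl_nl Q.hB0, bl_subl Q.hB0, bl_ar Q.hB0, bl_sr Q.hB0, bl_nr Q.hB0, bl_subr Q.hB0, bl_zl Q.hB0, bl_zr Q.hB0, bl_al Q.hB1, bl_sl Q.hB1,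 bl_nl Q.hB1, bl_subl Q.hB1, bl_ar Q.hB1, bl_sr Q.hB1, bl_nr Q.hB1, bl_subr Q.hB1, bl_zl Q.hB1, bl_zr Q.hB1, d0add, d0smul, d0neg, d0sub, d0zero, d1add, d1smul, d1neg, d1sub, d1zero, hder00, hder01, hder11, smul_add, smul_sub, smul_neg, smul_smul, zero_smul, smul_zero, mul_zero, zero_mul, one_mul, mul_one, add_zero, zero_add, neg_zero, sub_zero, zero_sub]
      ring
    · rintro r ⟨a, X, c⟩ ⟨b, Y, d⟩ ⟨e, Z, f⟩
      simp only [Prod.smul_mk, Prod.mk_add_mk, Prod.mk.injEq, smul_eq_mul, bl_al Q.hb00, bl_sl Q.hb00, bl_nl Q.hb00, bl_subl Q.hb00, bl_ar Q.hb00, bl_sr Q.hb00, bl_nr Q.hb00, bl_subr Q.hb00, bl_zl Q.hb00, bl_zr Q.hb00, bl_al Q.hb01, bl_sl Q.hb01, bl_nl Q.hb01, bl_subl Q.hb01, bl_ar Q.hb01, bl_sr Q.hb01, bl_nr Q.hb01, bl_subr Q.hb01, bl_zl Q.hb01, bl_zr Q.hb01, bl_al Q.hb11, bl_sl Q.hb11,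 bl_nl Q.hb11, bl_subl Q.hb11, bl_ar Q.hb11, bl_sr Q.hb11, bl_nr Q.hb11, bl_subr Q.hb11, bl_zl Q.hb11, bl_zr Q.hb11, bl_al Q.hB0, bl_sl Q.hB0, bl_nl Q.hB0, bl_subl Q.hB0, bl_ar Q.hB0, bl_sr Q.hB0, bl_nr Q.hB0, bl_subr Q.hB0, bl_zl Q.hB0, bl_zr Q.hB0, bl_al Q.hB1, bl_sl Q.hB1, bl_nl Q.hB1, bl_subl Q.hB1, bl_ar Q.hB1, bl_sr Q.hB1, bl_nr Q.hB1, bl_subr Q.hB1, bl_zl Q.hB1, bl_zr Q.hB1, d0add, d0smul, d0neg, d0sub, d0zero, d1add, d1smul, d1neg, d1sub, d1zero, hder00, hder01, hder11, smul_add, smul_sub, smul_neg, smul_smul, zero_smul, smul_zero, mul_zero, zero_mul, one_mul, mul_one, add_zero, zero_add, neg_zero, sub_zero, zero_sub]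
      ring
  · rintro ⟨a, X, c⟩ ⟨b, Y, d⟩
    simp only [Prod.neg_mk, Prod.mk.injEq, neg_zero]
    refine ⟨trivial, by linear_combination (norm := module) Q.b00_skew X Y,
      by linear_combination hskew0 X Y - Q.B0_symm X (D0 Y)⟩
  · rintro U V
    simp only [Prod.mk.injEq]
    refine ⟨trivial, Q.b11_symm U V,
      by linear_combination hskew1 U V - Q.B1_skew U (D1 V)⟩
  · rintro ⟨a, X, c⟩ ⟨b, Y, d⟩ ⟨e, Z, f⟩
    simp only [Prod.smul_mk, Prod.mk_add_mk, Prod.mk.injEq, smul_eq_mul, bl_al Q.hb00, bl_sl Q.hb00, bl_nl Q.hb00, bl_subl Q.hb00, bl_ar Q.hb00, bl_sr Q.hb00, bl_nr Q.hb00, bl_subr Q.hb00, bl_zl Q.hb00, bl_zr Q.hb00, bl_al Q.hb01, bl_sl Q.hb01, bl_nl Q.hb01, bl_subl Q.hb01, bl_ar Q.hb01, bl_sr Q.hb01, bl_nr Q.hb01, bl_subr Q.hb01, bl_zl Q.hb01, bl_zr Q.hb01, bl_al Q.hb11, bl_sl Q.hb11, bl_nl Q.hb11, bl_subl Q.hb11,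 bl_ar Q.hb11, bl_sr Q.hb11, bl_nr Q.hb11, bl_subr Q.hb11, bl_zl Q.hb11, bl_zr Q.hb11, bl_al Q.hB0, bl_sl Q.hB0, bl_nl Q.hB0, bl_subl Q.hB0, bl_ar Q.hB0, bl_sr Q.hB0, bl_nr Q.hB0, bl_subr Q.hB0, bl_zl Q.hB0, bl_zr Q.hB0, bl_al Q.hB1, bl_sl Q.hB1, bl_nl Q.hB1, bl_subl Q.hB1, bl_ar Q.hB1, bl_sr Q.hB1, bl_nr Q.hB1, bl_subr Q.hB1, bl_zl Q.hB1, bl_zr Q.hB1, d0add, d0smul, d0neg, d0sub, d0zero, d1add, d1smul, d1neg, d1sub, d1zero, hder00, hder01, hder11, smul_add, smul_sub, smul_neg, smul_smul, zero_smul, smul_zero, mul_zero, zero_mul, one_mul, mul_one, add_zero, zero_add, neg_zero, sub_zero, zero_sub]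
    simp only [Prod.mk_eq_zero]
    refine ⟨trivial, ?_, ?_⟩
    · linear_combination (norm := module) Q.jacobi000 X Y Z - a • Q.b00_skew Y (D0 Z) -
        b • Q.b00_skew (D0 X) Z - e • Q.b00_skew X (D0 Y)
    · linear_combination 2 * sum3 X Y Z + pair X (D0 Y) Z + pair Y (D0 Z) X +
        pair Z (D0 X) Y + a * dd Y Z + b * dd Z X + e * dd X Y
  · rintro ⟨a, X, c⟩ ⟨b, Y, d⟩ U
    simp only [Prod.smul_mk, Prod.mk_add_mk, Prod.mk.injEq, smul_eq_mul, bl_al Q.hb00, bl_sl Q.hb00, bl_nl Q.hb00, bl_subl Q.hb00, bl_ar Q.hb00, bl_sr Q.hb00, bl_nr Q.hb00, bl_subr Q.hb00, bl_zl Q.hb00, bl_zr Q.hb00, bl_al Q.hb01, bl_sl Q.hb01, bl_nl Q.hb01, bl_subl Q.hb01, bl_ar Q.hb01, bl_sr Q.hb01, bl_nr Q.hb01, bl_subr Q.hb01, bl_zl Q.hb01, bl_zr Q.hb01, bl_al Q.hb11, bl_sl Q.hb11, bl_nl Q.hb11, bl_subl Q.hb11, bl_ar Q.hb11, bl_sr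 Q.hb11, bl_nr Q.hb11, bl_subr Q.hb11, bl_zl Q.hb11, bl_zr Q.hb11, bl_al Q.hB0, bl_sl Q.hB0, bl_nl Q.hB0, bl_subl Q.hB0, bl_ar Q.hB0, bl_sr Q.hB0, bl_nr Q.hB0, bl_subr Q.hB0, bl_zl Q.hB0, bl_zr Q.hB0, bl_al Q.hB1, bl_sl Q.hB1, bl_nl Q.hB1, bl_subl Q.hB1, bl_ar Q.hB1, bl_sr Q.hB1, bl_nr Q.hB1, bl_subr Q.hB1, bl_zl Q.hB1, bl_zr Q.hB1, d0add, d0smul, d0neg, d0sub, d0zero, d1add, d1smul, d1neg, d1sub, d1zero, hder00, hder01, hder11, smul_add, smul_sub, smul_neg, smul_smul, zero_smul, smul_zero, mul_zero, zero_mul, one_mul, mul_one, add_zero, zero_add, neg_zero, sub_zero, zero_sub]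
    linear_combination (norm := module) Q.jacobi001 X Y U
  · rintro ⟨a, X, c⟩ U V
    simp only [Prod.smul_mk, Prod.mk_add_mk, Prod.mk.injEq, smul_eq_mul, bl_al Q.hb00, bl_sl Q.hb00, bl_nl Q.hb00, bl_subl Q.hb00, bl_ar Q.hb00, bl_sr Q.hb00, bl_nr Q.hb00, bl_subr Q.hb00, bl_zl Q.hb00, bl_zr Q.hb00, bl_al Q.hb01, bl_sl Q.hb01, bl_nl Q.hb01, bl_subl Q.hb01, bl_ar Q.hb01, bl_sr Q.hb01, bl_nr Q.hb01, bl_subr Q.hb01, bl_zl Q.hb01, bl_zr Q.hb01, bl_al Q.hb11, bl_sl Q.hb11, bl_nl Q.hb11, bl_subl Q.hb11, bl_ar Q.hb11, bl_sr Q.hb11, bl_nr Q.hb11, bl_subr Q.hb11, bl_zl Q.hb11, bl_zr Q.hb11, bl_al Q.hB0, bl_sl Q.hB0, bl_nl Q.hB0, bl_subl Q.hB0, bl_ar Q.hB0, bl_sr Q.hB0, bl_nr Q.hB0, bl_subr Q.hB0, bl_zl Q.hB0, bl_zr Q.hB0, bl_al Q.hB1, bl_sl Q.hB1, bl_nl Q.hB1,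 bl_subl Q.hB1, bl_ar Q.hB1, bl_sr Q.hB1, bl_nr Q.hB1, bl_subr Q.hB1, bl_zl Q.hB1, bl_zr Q.hB1, d0add, d0smul, d0neg, d0sub, d0zero, d1add, d1smul, d1neg, d1sub, d1zero, hder00, hder01, hder11, smul_add, smul_sub, smul_neg, smul_smul, zero_smul, smul_zero, mul_zero, zero_mul, one_mul, mul_one, add_zero, zero_add, neg_zero, sub_zero, zero_sub]
    refine ⟨trivial, ?_, ?_⟩
    · linear_combination (norm := module) Q.jacobi011 X U V
    · linear_combination -Q.inv011 (D0 X) U V - Q.inv011 X (D1 U) V - h3' X U V -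
        a * hskew1 (D1 U) V
  · rintro U V W
    simp only [Prod.smul_mk, Prod.mk_add_mk, Prod.mk.injEq, smul_eq_mul, bl_al Q.hb00, bl_sl Q.hb00, bl_nl Q.hb00, bl_subl Q.hb00, bl_ar Q.hb00, bl_sr Q.hb00, bl_nr Q.hb00, bl_subr Q.hb00, bl_zl Q.hb00, bl_zr Q.hb00, bl_al Q.hb01, bl_sl Q.hb01, bl_nl Q.hb01, bl_subl Q.hb01, bl_ar Q.hb01, bl_sr Q.hb01, bl_nr Q.hb01, bl_subr Q.hb01, bl_zl Q.hb01, bl_zr Q.hb01, bl_al Q.hb11, bl_sl Q.hb11, bl_nl Q.hb11, bl_subl Q.hb11, bl_ar Q.hb11, bl_sr Q.hb11, bl_nr Q.hb11, bl_subr Q.hb11, bl_zl Q.hb11, bl_zr Q.hb11, bl_al Q.hB0, bl_sl Q.hB0, bl_nl Q.hB0, bl_subl Q.hB0, bl_ar Q.hB0, bl_sr Q.hB0, bl_nr Q.hB0, bl_subr Q.hB0, bl_zl Q.hB0, bl_zr Q.hB0, bl_al Q.hB1, bl_sl Q.hB1, bl_nl Q.hB1, bl_subl Q.hB1, bl_ar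 Q.hB1, bl_sr Q.hB1, bl_nr Q.hB1, bl_subr Q.hB1, bl_zl Q.hB1, bl_zr Q.hB1, d0add, d0smul, d0neg, d0sub, d0zero, d1add, d1smul, d1neg, d1sub, d1zero, hder00, hder01, hder11, smul_add, smul_sub, smul_neg, smul_smul, zero_smul, smul_zero, mul_zero, zero_mul, one_mul, mul_one, add_zero, zero_add, neg_zero, sub_zero, zero_sub]
    linear_combination (norm := module) Q.jacobi111 U V W
  · rintro ⟨a, X, c⟩ ⟨b, Y, d⟩
    linear_combination Q.B0_symm X Y
  · rintro ⟨a, X, c⟩ ⟨b, Y, d⟩ ⟨e, Z, f⟩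
    simp only [Prod.smul_mk, Prod.mk_add_mk, Prod.mk.injEq, smul_eq_mul, bl_al Q.hb00, bl_sl Q.hb00, bl_nl Q.hb00, bl_subl Q.hb00, bl_ar Q.hb00, bl_sr Q.hb00, bl_nr Q.hb00, bl_subr Q.hb00, bl_zl Q.hb00, bl_zr Q.hb00, bl_al Q.hb01, bl_sl Q.hb01, bl_nl Q.hb01, bl_subl Q.hb01, bl_ar Q.hb01, bl_sr Q.hb01, bl_nr Q.hb01, bl_subr Q.hb01, bl_zl Q.hb01, bl_zr Q.hb01, bl_al Q.hb11, bl_sl Q.hb11, bl_nl Q.hb11, bl_subl Q.hb11, bl_ar Q.hb11, bl_sr Q.hb11, bl_nr Q.hb11, bl_subr Q.hb11, bl_zl Q.hb11, bl_zr Q.hb11, bl_al Q.hB0, bl_sl Q.hB0, bl_nl Q.hB0, bl_subl Q.hB0, bl_ar Q.hB0, bl_sr Q.hB0, bl_nr Q.hB0, bl_subr Q.hB0, bl_zl Q.hB0, bl_zr Q.hB0, bl_al Q.hB1, bl_sl Q.hB1, bl_nl Q.hB1, bl_subl Q.hB1, bl_ar Q.hB1, bl_sr Q.hB1, bl_nr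 Q.hB1, bl_subr Q.hB1, bl_zl Q.hB1, bl_zr Q.hB1, d0add, d0smul, d0neg, d0sub, d0zero, d1add, d1smul, d1neg, d1sub, d1zero, hder00, hder01, hder11, smul_add, smul_sub, smul_neg, smul_smul, zero_smul, smul_zero, mul_zero, zero_mul, one_mul, mul_one, add_zero, zero_add, neg_zero, sub_zero, zero_sub]
    linear_combination Q.inv000 X Y Z - b * hskew0 X Z + e * hskew0 X Y
  · rintro ⟨a, X, c⟩ U V
    simp only [Prod.smul_mk, Prod.mk_add_mk, Prod.mk.injEq, smul_eq_mul, bl_al Q.hb00, bl_sl Q.hb00, bl_nl Q.hb00, bl_subl Q.hb00, bl_ar Q.hb00, bl_sr Q.hb00, bl_nr Q.hb00, bl_subr Q.hb00, bl_zl Q.hb00, bl_zr Q.hb00, bl_al Q.hb01, bl_sl Q.hb01, bl_nl Q.hb01, bl_subl Q.hb01, bl_ar Q.hb01, bl_sr Q.hb01, bl_nr Q.hb01, bl_subr Q.hb01, bl_zl Q.hb01, bl_zr Q.hb01, bl_al Q.hb11, bl_sl Q.hb11, bl_nl Q.hb11, bl_subl Q.hb11, bl_ar Q.hb11, bl_sr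 Q.hb11, bl_nr Q.hb11, bl_subr Q.hb11, bl_zl Q.hb11, bl_zr Q.hb11, bl_al Q.hB0, bl_sl Q.hB0, bl_nl Q.hB0, bl_subl Q.hB0, bl_ar Q.hB0, bl_sr Q.hB0, bl_nr Q.hB0, bl_subr Q.hB0, bl_zl Q.hB0, bl_zr Q.hB0, bl_al Q.hB1, bl_sl Q.hB1, bl_nl Q.hB1, bl_subl Q.hB1, bl_ar Q.hB1, bl_sr Q.hB1, bl_nr Q.hB1, bl_subr Q.hB1, bl_zl Q.hB1, bl_zr Q.hB1, d0add, d0smul, d0neg, d0sub, d0zero, d1add, d1smul, d1neg, d1sub, d1zero, hder00, hder01, hder11, smul_add, smul_sub, smul_neg, smul_smul, zero_smul, smul_zero, mul_zero, zero_mul, one_mul, mul_one, add_zero, zero_add, neg_zero, sub_zero, zero_sub]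
    linear_combination Q.inv011 X U V
  · rintro ⟨a, X, c⟩ h
    have ha : a = 0 := by have := h (0, 0, 1); simpa [bl_zr Q.hB0] using this
    have hc : c = 0 := by have := h (1, 0, 0); simpa [bl_zr Q.hB0] using this
    have hX : X = 0 := Q.B0_nondeg X (fun Y => by have := h (0, Y, 0); simpa using this)
    simp [ha, hc, hX, Prod.ext_iff]
end
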